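/- Let L be an algebraic lattice and let φ₁, φ₂ be algebraic (finitary) closure operators on L. Then both the meet of φ₁ and φ₂ in the lattice of closure operators on L (which is the pointwise meet x ↦ φ₁(x) ⊓ φ₂(x)) and the join of φ₁ and φ₂ in the lattice of closure operators on L (the least closure operator above both in the pointwise order) are algebraic closure operators. Hence the algebraic closure operators form a sublattice of the lattice of all closure operators on L. -/

import Mathlib

/-- A closure operator on a complete lattice: extensive, idempotent and isotone. -/
def IsClosureOp {L : Type*} [CompleteLattice L] (φ : L → L) : Prop :=
  (∀ x, x ≤ φ x) ∧ (∀ x, φ (φ x) = φ x) ∧ (∀ x y : L, x ≤ y → φ x ≤ φ y)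

/-- A map on a complete lattice is finitary if its value at `x` is the sup of its
values at the compact elements below `x`. -/
def Finitary {L : Type*} [CompleteLattice L] (φ : L → L) : Prop :=
  ∀ x : L, φ x = ⨆ k ∈ {k : L | IsCompactElement k ∧ k ≤ x}, φ k

open CompleteLattice

section Aux

variable {L : Type*} [CompleteLattice L]

/-- `⊥` is compact. -/
lemma aco_bot_compact : IsCompactElement (⊥ : L) := fun _ _ hne _ _ _ =>
  let ⟨x, hx⟩ := hne; ⟨x, hx, bot_le⟩

/-- The sup of two compact elements is compact. -/
lemma aco_sup_compact {a b : L} (ha : IsCompactElement a) (hb : IsCompactElement b) :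
    IsCompactElement (a ⊔ b) := by
  intro s u hne hdir hlub hs
  obtain ⟨x₁, hx₁, hle₁⟩ := ha s u hne hdir hlub (le_sup_left.trans hs)
  obtain ⟨x₂, hx₂, hle₂⟩ := hb s u hne hdir hlub (le_sup_right.trans hs)
  obtain ⟨z, hz, h1, h2⟩ := hdir x₁ hx₁ x₂ hx₂
  exact ⟨z, hz, sup_le (hle₁.trans h1) (hle₂.trans h2)⟩

lemma aco_K_nonempty (x : L) : {k : L | IsCompactElement k ∧ k ≤ x}.Nonempty :=
  ⟨⊥, aco_bot_compact, bot_le⟩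

lemma aco_K_directed (x : L) : DirectedOn (· ≤ ·) {k : L | IsCompactElement k ∧ k ≤ x} := by
  rintro a ⟨ha, hax⟩ b ⟨hb, hbx⟩
  exact ⟨a ⊔ b, ⟨aco_sup_compact ha hb, sup_le hax hbx⟩, le_sup_left, le_sup_right⟩

/-- Monotone image of a directed set is directed. -/
lemma aco_image_directed {φ : L → L} (mono : ∀ a b : L, a ≤ b → φ a ≤ φ b) {S : Set L}
    (hS : DirectedOn (· ≤ ·) S) : DirectedOn (· ≤ ·) (φ '' S) := by
  rintro _ ⟨a, ha, rfl⟩ _ ⟨b, hb, rfl⟩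
  obtain ⟨c, hc, hac, hbc⟩ := hS a ha b hb
  exact ⟨φ c, ⟨c, hc, rfl⟩, mono _ _ hac, mono _ _ hbc⟩

/-- A compact element below a finitary value is below the value at a compact element. -/
lemma aco_compact_le {φ : L → L} (mono : ∀ a b : L, a ≤ b → φ a ≤ φ b) (fin : Finitary φ)
    {c x : L} (hc : IsCompactElement c) (hcx : c ≤ φ x) :
    ∃ k : L, IsCompactElement k ∧ k ≤ x ∧ c ≤ φ k := by
  have h : c ≤ sSup (φ '' {k : L | IsCompactElement k ∧ k ≤ x}) := by
    rw [sSup_image]; rwa [fin x] at hcx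
  obtain ⟨_, ⟨k, hk, rfl⟩, hck⟩ :=
    (isCompactElement_iff_le_of_directed_sSup_le L c).mp hc _
      ((aco_K_nonempty x).image φ) (aco_image_directed mono (aco_K_directed x)) h
  exact ⟨k, hk.1, hk.2, hck⟩

/-- Finitary monotone maps are Scott continuous. -/
lemma aco_scott {φ : L → L} (mono : ∀ a b : L, a ≤ b → φ a ≤ φ b) (fin : Finitary φ)
    {D : Set L} (hne : D.Nonempty) (hdir : DirectedOn (· ≤ ·) D) :
    φ (sSup D) = ⨆ d ∈ D, φ d := by
  refine le_antisymm ?_ (iSup₂_le fun d hd => mono _ _ (le_sSup hd))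
  rw [fin (sSup D)]
  refine iSup₂_le fun k hk => ?_
  obtain ⟨d, hd, hkd⟩ :=
    (isCompactElement_iff_le_of_directed_sSup_le L k).mp hk.1 D hne hdir hk.2
  exact le_trans (mono _ _ hkd) (le_iSup₂ (f := fun d _ => φ d) d hd)

end Aux

/-- For algebraic closure operators `φ₁, φ₂` on an algebraic lattice, their meet
in the lattice of closure operators (the pointwise meet) is an algebraic closure
operator, and their join in the lattice of closure operators (the least closure
operator above both in the pointwise order) is an algebraic closure operator.
Hence the algebraic closure operators form a sublattice of the lattice of all
closure operators. -/
theorem aco_sublattice {L : Type*} [CompleteLattice L] [IsCompactlyGenerated L]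
    (φ₁ φ₂ : L → L) (h₁ : IsClosureOp φ₁) (h₂ : IsClosureOp φ₂)
    (f₁ : Finitary φ₁) (f₂ : Finitary φ₂) :
    (IsClosureOp (fun x => φ₁ x ⊓ φ₂ x) ∧ Finitary (fun x => φ₁ x ⊓ φ₂ x)) ∧
    (∀ ψ : L → L, IsClosureOp ψ →
      (∀ x, φ₁ x ≤ ψ x) → (∀ x, φ₂ x ≤ ψ x) →
      (∀ ρ : L → L, IsClosureOp ρ → (∀ x, φ₁ x ≤ ρ x) → (∀ x, φ₂ x ≤ ρ x) →
        ∀ x, ψ x ≤ ρ x) →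
      Finitary ψ) := by
  obtain ⟨e₁, i₁, m₁⟩ := h₁
  obtain ⟨e₂, i₂, m₂⟩ := h₂
  constructor
  · constructor
    · refine ⟨fun x => le_inf (e₁ x) (e₂ x), fun x => ?_,
        fun x y h => inf_le_inf (m₁ _ _ h) (m₂ _ _ h)⟩
      show φ₁ (φ₁ x ⊓ φ₂ x) ⊓ φ₂ (φ₁ x ⊓ φ₂ x) = φ₁ x ⊓ φ₂ x
      refine le_antisymm ?_ (le_inf (e₁ _) (e₂ _))
      exact le_inf (inf_le_left.trans ((m₁ _ _ inf_le_left).trans_eq (i₁ x)))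
        (inf_le_right.trans ((m₂ _ _ inf_le_right).trans_eq (i₂ x)))
    · intro x
      show φ₁ x ⊓ φ₂ x = ⨆ k ∈ {k : L | IsCompactElement k ∧ k ≤ x}, φ₁ k ⊓ φ₂ k
      refine le_antisymm ?_ (iSup₂_le fun k hk => inf_le_inf (m₁ _ _ hk.2) (m₂ _ _ hk.2))
      conv_lhs => rw [← sSup_compact_le_eq (φ₁ x ⊓ φ₂ x)]
      refine sSup_le fun c hc => ?_
      obtain ⟨k₁, hk₁, hk₁x, hck₁⟩ := aco_compact_le m₁ f₁ hc.1 (hc.2.trans inf_le_left)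
      obtain ⟨k₂, hk₂, hk₂x, hck₂⟩ := aco_compact_le m₂ f₂ hc.1 (hc.2.trans inf_le_right)
      refine le_trans ?_ (le_iSup₂ (f := fun k (_ : IsCompactElement k ∧ k ≤ x) => φ₁ k ⊓ φ₂ k)
        (k₁ ⊔ k₂) ⟨aco_sup_compact hk₁ hk₂, sup_le hk₁x hk₂x⟩)
      exact le_inf (hck₁.trans (m₁ _ _ le_sup_left)) (hck₂.trans (m₂ _ _ le_sup_right))
  · intro ψ hψ hψ1 hψ2 hleast
    set g : L → L := fun x => φ₂ (φ₁ x) with hg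
    have gmono : ∀ a b : L, a ≤ b → g a ≤ g b := fun a b h => m₂ _ _ (m₁ _ _ h)
    have gext : ∀ x : L, x ≤ g x := fun x => (e₁ x).trans (e₂ _)
    have gscott : ∀ {D : Set L}, D.Nonempty → DirectedOn (· ≤ ·) D →
        g (sSup D) = ⨆ d ∈ D, g d := by
      intro D hne hdir
      have h1 : φ₁ (sSup D) = sSup (φ₁ '' D) := by
        rw [aco_scott m₁ f₁ hne hdir, sSup_image]
      rw [hg]
      simp only
      rw [h1, aco_scott m₂ f₂ (hne.image φ₁) (aco_image_directed m₁ hdir), iSup_image]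
    have itermono : ∀ (n : ℕ) (a b : L), a ≤ b → g^[n] a ≤ g^[n] b := by
      intro n
      induction n with
      | zero => simp
      | succ n ih =>
        intro a b h
        rw [Function.iterate_succ_apply', Function.iterate_succ_apply']
        exact gmono _ _ (ih _ _ h)
    have chainmono : ∀ x : L, Monotone fun n : ℕ => g^[n] x := by
      intro x
      refine monotone_nat_of_le_succ fun n => ?_
      rw [Function.iterate_succ_apply']
      exact gext _
    set ρ : L → L := fun x => ⨆ n : ℕ, g^[n] x with hρ
    have ρext : ∀ x : L, x ≤ ρ x := fun x => le_iSup (fun n : ℕ => g^[n] x) 0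
    have ρfix : ∀ x : L, g (ρ x) ≤ ρ x := by
      intro x
      have hr : ρ x = sSup (Set.range fun n : ℕ => g^[n] x) := rfl
      rw [hr, gscott (Set.range_nonempty _) ((chainmono x).directed_le.directedOn_range)]
      rw [iSup_range]
      exact iSup_le fun n => by
        rw [show g (g^[n] x) = g^[n+1] x from (Function.iterate_succ_apply' g n x).symm]
        exact le_iSup (fun n : ℕ => g^[n] x) (n + 1)
    have ρiterfix : ∀ (n : ℕ) (x : L), g^[n] (ρ x) ≤ ρ x := by
      intro n x
      induction n with
      | zero => simp
      | succ n ih =>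
        rw [Function.iterate_succ_apply']
        exact (gmono _ _ ih).trans (ρfix x)
    have ρclos : IsClosureOp ρ := by
      refine ⟨ρext, fun x => le_antisymm (iSup_le fun n => ρiterfix n x) (ρext _),
        fun a b h => iSup_mono fun n => itermono n _ _ h⟩
    have ρ1 : ∀ x, φ₁ x ≤ ρ x := by
      intro x
      have : φ₁ x ≤ g x := e₂ _
      exact this.trans (by simpa using le_iSup (fun n : ℕ => g^[n] x) 1)
    have ρ2 : ∀ x, φ₂ x ≤ ρ x := by
      intro x
      have : φ₂ x ≤ g x := m₂ _ _ (e₁ x)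
      exact this.trans (by simpa using le_iSup (fun n : ℕ => g^[n] x) 1)
    -- each iterate is finitary
    have iterfin : ∀ (n : ℕ) (x : L),
        g^[n] x = ⨆ k ∈ {k : L | IsCompactElement k ∧ k ≤ x}, g^[n] k := by
      intro n
      induction n with
      | zero =>
        intro x
        simpa using (sSup_eq_iSup.symm.trans (sSup_compact_le_eq x)).symm
      | succ n ih =>
        intro x
        rw [Function.iterate_succ_apply', ih x, ← sSup_image,
          gscott ((aco_K_nonempty x).image _)
            (aco_image_directed (itermono n) (aco_K_directed x)), iSup_image]
        refine iSup_congr fun k => iSup_congr fun hk => ?_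
        exact (Function.iterate_succ_apply' g n k).symm
    have ρfin : Finitary ρ := by
      intro x
      refine le_antisymm ?_ (iSup₂_le fun k hk => iSup_mono fun n => itermono n _ _ hk.2)
      refine iSup_le fun n => ?_
      rw [iterfin n x]
      exact iSup₂_mono fun k hk => le_iSup (fun m : ℕ => g^[m] k) n
    -- ψ = ρ
    have ρψ : ∀ x, ρ x ≤ ψ x := by
      intro x
      refine iSup_le fun n => ?_
      induction n with
      | zero => simpa using hψ.1 x
      | succ n ih =>
        rw [Function.iterate_succ_apply']
        calc g (g^[n] x) ≤ g (ψ x) := gmono _ _ ih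
          _ ≤ φ₂ (ψ x) := by
              have h := m₂ _ _ (hψ1 (ψ x))
              rwa [hψ.2.1 x] at h
          _ ≤ ψ (ψ x) := hψ2 (ψ x)
          _ = ψ x := hψ.2.1 x
    have ψρ : ∀ x, ψ x ≤ ρ x := hleast ρ ρclos ρ1 ρ2
    have heq : ∀ x, ψ x = ρ x := fun x => le_antisymm (ψρ x) (ρψ x)
    intro x
    rw [heq x, ρfin x]
    exact iSup_congr fun k => iSup_congr fun _ => (heq k).symm
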